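/- Let {A_t}_{t≥0} be an arbitrary sequence of subsets of {1,…,m} with |A_t| ≥ ηm for all t, and suppose S satisfies the BRIP condition with parameters (η, ε) where ε < 1/7. Suppose λh is differentiable and L-smooth, and let the iterates be generated by encoded gradient descent w_{t+1} = w_t − α ∇f̃^{A_t}(w_t) with a constant step size α satisfying 0 < α ≤ 1/(M+L). Then for every t ≥ 1, (1/t)·Σ_{τ=1}^t f(w_τ) − ((1+3ε)/(1−7ε))·f(w*) ≤ (4ε f(w_0) + (1/(2α))‖w_0 − w*‖²) / ((1−7ε) t). -/

import Mathlib

open Matrix Finset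

noncomputable section

namespace Stmt0

/-- The original objective `f(w) = (1/2)‖Xw − y‖² + λ h(w)`. -/
def objF {n p : ℕ} (X : Matrix (Fin n) (Fin p) ℝ) (y : Fin n → ℝ) (lam : ℝ)
    (h : (Fin p → ℝ) → ℝ) (w : Fin p → ℝ) : ℝ :=
  (1 / 2) * ((X *ᵥ w - y) ⬝ᵥ (X *ᵥ w - y)) + lam * h w

/-- `‖S_A z‖² = ∑_{i ∈ A} ‖S_i z‖²`, the quadratic form of `S_Aᵀ S_A`. -/
def encSq {n r m : ℕ} (S : Fin m → Matrix (Fin r) (Fin n) ℝ) (A : Finset (Fin m))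
    (z : Fin n → ℝ) : ℝ :=
  ∑ i ∈ A, (S i *ᵥ z) ⬝ᵥ (S i *ᵥ z)

/-- Gradient of the encoded objective
`f̃^A(w) = (1/2)‖S_A (Xw − y)‖² + λ h(w)`, namely
`Xᵀ S_Aᵀ S_A (Xw − y) + λ ∇h(w)`. -/
def gradTilde {n p r m : ℕ} (X : Matrix (Fin n) (Fin p) ℝ) (y : Fin n → ℝ)
    (S : Fin m → Matrix (Fin r) (Fin n) ℝ) (lam : ℝ)
    (hgrad : (Fin p → ℝ) → (Fin p → ℝ)) (A : Finset (Fin m)) (w : Fin p → ℝ) :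
    Fin p → ℝ :=
  Xᵀ *ᵥ (∑ i ∈ A, (S i)ᵀ *ᵥ (S i *ᵥ (X *ᵥ w - y))) + lam • hgrad w

/- ### Auxiliary lemmas -/

lemma dot_self_nonneg' {k : ℕ} (v : Fin k → ℝ) : 0 ≤ v ⬝ᵥ v :=
  Finset.sum_nonneg fun _ _ => mul_self_nonneg _

lemma encSq_nonneg {n r m : ℕ} (S : Fin m → Matrix (Fin r) (Fin n) ℝ) (B : Finset (Fin m))
    (z : Fin n → ℝ) : 0 ≤ encSq S B z :=
  Finset.sum_nonneg fun _ _ => dot_self_nonneg' _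

lemma transpose_dot {n p : ℕ} (X : Matrix (Fin n) (Fin p) ℝ) (u : Fin n → ℝ) (v : Fin p → ℝ) :
    (Xᵀ *ᵥ u) ⬝ᵥ v = u ⬝ᵥ (X *ᵥ v) := by
  rw [Matrix.mulVec_transpose, Matrix.dotProduct_mulVec]

lemma sum_dotProduct' {k m : ℕ} (B : Finset (Fin m)) (f : Fin m → Fin k → ℝ) (v : Fin k → ℝ) :
    (∑ i ∈ B, f i) ⬝ᵥ v = ∑ i ∈ B, f i ⬝ᵥ v := by
  simp only [dotProduct, Finset.sum_apply, Finset.sum_mul]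
  exact Finset.sum_comm

lemma dot_sub_smul {p : ℕ} (u g : Fin p → ℝ) (a : ℝ) :
    (u - a • g) ⬝ᵥ (u - a • g) = u ⬝ᵥ u - 2*a*(g ⬝ᵥ u) + a^2 * (g ⬝ᵥ g) := by
  simp only [dotProduct, Pi.sub_apply, Pi.smul_apply, smul_eq_mul, Finset.mul_sum,
    ← Finset.sum_sub_distrib, ← Finset.sum_add_distrib]
  exact Finset.sum_congr rfl fun i _ => by ring

lemma encSq_add {n r m : ℕ} (S : Fin m → Matrix (Fin r) (Fin n) ℝ) (B : Finset (Fin m))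
    (z d : Fin n → ℝ) :
    encSq S B (z + d) = encSq S B z + 2 * ∑ i ∈ B, (S i *ᵥ z) ⬝ᵥ (S i *ᵥ d) + encSq S B d := by
  unfold encSq
  rw [Finset.sum_congr rfl (fun i (_ : i ∈ B) => show (S i *ᵥ (z + d)) ⬝ᵥ (S i *ᵥ (z + d)) =
      (S i *ᵥ z) ⬝ᵥ (S i *ᵥ z) + 2 * ((S i *ᵥ z) ⬝ᵥ (S i *ᵥ d)) + (S i *ᵥ d) ⬝ᵥ (S i *ᵥ d) by
    rw [Matrix.mulVec_add, add_dotProduct, dotProduct_add, dotProduct_add,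
      dotProduct_comm (S i *ᵥ d) (S i *ᵥ z)]
    ring)]
  rw [Finset.sum_add_distrib, Finset.sum_add_distrib, ← Finset.mul_sum]

lemma gradQ_dot {n p r m : ℕ} (X : Matrix (Fin n) (Fin p) ℝ)
    (S : Fin m → Matrix (Fin r) (Fin n) ℝ) (B : Finset (Fin m))
    (z : Fin n → ℝ) (d : Fin p → ℝ) :
    (Xᵀ *ᵥ ∑ i ∈ B, (S i)ᵀ *ᵥ (S i *ᵥ z)) ⬝ᵥ d = ∑ i ∈ B, (S i *ᵥ z) ⬝ᵥ (S i *ᵥ (X *ᵥ d)) := by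
  rw [transpose_dot, sum_dotProduct']
  exact Finset.sum_congr rfl fun i _ => transpose_dot (S i) _ _

lemma enc_expand {n p r m : ℕ} (X : Matrix (Fin n) (Fin p) ℝ) (y : Fin n → ℝ)
    (S : Fin m → Matrix (Fin r) (Fin n) ℝ) (B : Finset (Fin m)) (v u : Fin p → ℝ) :
    (1/2) * encSq S B (X *ᵥ v - y) = (1/2) * encSq S B (X *ᵥ u - y)
      + (Xᵀ *ᵥ ∑ i ∈ B, (S i)ᵀ *ᵥ (S i *ᵥ (X *ᵥ u - y))) ⬝ᵥ (v - u)
      + (1/2) * encSq S B (X *ᵥ (v - u)) := by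
  have h1 : X *ᵥ v - y = (X *ᵥ u - y) + X *ᵥ (v - u) := by
    rw [Matrix.mulVec_sub]; abel
  rw [h1, encSq_add, gradQ_dot]; ring

lemma final_arith (ε α Sg F0 Fs D0 T : ℝ) (hε0 : 0 < ε) (hε : ε < 1/7)
    (hα0 : 0 < α) (hT : 1 ≤ T) (hF0 : 0 ≤ F0) (hFs : 0 ≤ Fs) (hD0 : 0 ≤ D0)
    (key : 2*α*(1-ε)*Sg ≤ (1-ε)*D0 + 2*α*ε*(1+ε)*(F0 + Sg) + 2*α*(1-ε)*(1+ε)*T*Fs) :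
    (1/T) * Sg - ((1+3*ε)/(1-7*ε)) * Fs ≤ (4*ε*F0 + (1/(2*α))*D0) / ((1-7*ε)*T) := by
  have h7 : 0 < 1 - 7*ε := by linarith
  have hT0 : 0 < T := by linarith
  have h12 : 0 < 1 - 2*ε - ε^2 := by nlinarith
  have hkey7 := mul_le_mul_of_nonneg_left key h7.le
  have hPF : (0:ℝ) ≤ 2*α*T*Fs := by positivity
  have hP0 : (0:ℝ) ≤ 2*α*F0 := by positivity
  have hc1 : (0:ℝ) ≤ (8*ε - 6*ε^2 - 10*ε^3) * (2*α*T*Fs) :=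
    mul_nonneg (by nlinarith) hPF
  have hc2 : (0:ℝ) ≤ (3*ε - 2*ε^2 + 3*ε^3) * (2*α*F0) :=
    mul_nonneg (by nlinarith) hP0
  have hc3 : (0:ℝ) ≤ (6*ε - 8*ε^2) * D0 := mul_nonneg (by nlinarith) hD0
  have G' : (1 - 2*ε - ε^2) * (2*α*((1-7*ε)*Sg)) ≤
      (1 - 2*ε - ε^2) * (2*α*((1+3*ε)*T*Fs + 4*ε*F0) + D0) := by
    nlinarith [hkey7, hc1, hc2, hc3]
  have G : 2*α*((1-7*ε)*Sg) ≤ 2*α*((1+3*ε)*T*Fs + 4*ε*F0) + D0 :=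
    le_of_mul_le_mul_left G' h12
  have h2α : (0:ℝ) < 2*α := by linarith
  have hid : 2*α*((1/(2*α))*D0) = D0 := by field_simp
  have key2 : (1-7*ε)*Sg ≤ ((1+3*ε)*T*Fs + 4*ε*F0) + (1/(2*α))*D0 := by
    rw [← mul_le_mul_iff_right₀ h2α, mul_add, hid]
    linarith [G]
  have heq : (1/T) * Sg - ((1+3*ε)/(1-7*ε)) * Fs
      = ((1-7*ε)*Sg - (1+3*ε)*T*Fs) / ((1-7*ε)*T) := by
    rw [eq_div_iff (mul_pos h7 hT0).ne', sub_mul,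
      show 1/T*Sg*((1-7*ε)*T) = (1-7*ε)*Sg*(T*T⁻¹) by ring,
      show (1+3*ε)/(1-7*ε)*Fs*((1-7*ε)*T) = (1+3*ε)*T*Fs*((1-7*ε)*(1-7*ε)⁻¹) by ring,
      mul_inv_cancel₀ hT0.ne', mul_inv_cancel₀ h7.ne', mul_one, mul_one]
  rw [heq]
  exact (div_le_div_iff_of_pos_right (by positivity : (0:ℝ) < (1-7*ε)*T)).mpr (by linarith [key2])

set_option maxHeartbeats 1000000 in
/-- encoded gradient descent, convex case, Theorem 1(1). -/
theorem encoded_gradient_descent_convex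
    {n p r m : ℕ}
    (X : Matrix (Fin n) (Fin p) ℝ) (y : Fin n → ℝ)
    (S : Fin m → Matrix (Fin r) (Fin n) ℝ)
    (η ε lam L M α : ℝ)
    (h : (Fin p → ℝ) → ℝ) (hgrad : (Fin p → ℝ) → (Fin p → ℝ))
    (A : ℕ → Finset (Fin m)) (w : ℕ → Fin p → ℝ) (wstar : Fin p → ℝ)
    -- BRIP parameters
    (hη0 : 0 < η) (hη1 : η ≤ 1) (hε0 : 0 < ε) (hε : ε < 1 / 7)
    -- BRIP condition: (1−ε)I ⪯ S_Aᵀ S_A ⪯ (1+ε)I for all |A| ≥ ηm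
    (hBRIP : ∀ B : Finset (Fin m), η * m ≤ (B.card : ℝ) →
      ∀ z : Fin n → ℝ,
        (1 - ε) * (z ⬝ᵥ z) ≤ encSq S B z ∧ encSq S B z ≤ (1 + ε) * (z ⬝ᵥ z))
    -- every active set is sufficiently large
    (hA : ∀ t, η * m ≤ (((A t).card : ℕ) : ℝ))
    -- M is (an upper bound for) the largest eigenvalue of XᵀX
    (hM : ∀ v : Fin p → ℝ, (X *ᵥ v) ⬝ᵥ (X *ᵥ v) ≤ M * (v ⬝ᵥ v))
    -- h is convex and nonnegative, λ ≥ 0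
    (hlam : 0 ≤ lam) (hh : ∀ v, 0 ≤ h v)
    -- λh is (differentiable and) convex with gradient λ ∇h
    (hconv : ∀ a b : Fin p → ℝ,
      lam * h a + (lam • hgrad a) ⬝ᵥ (b - a) ≤ lam * h b)
    -- λh is L-smooth
    (hsmooth : ∀ a b : Fin p → ℝ,
      lam * h b ≤ lam * h a + (lam • hgrad a) ⬝ᵥ (b - a) +
        L / 2 * ((b - a) ⬝ᵥ (b - a)))
    -- constant step size 0 < α ≤ 1/(M+L)
    (hα0 : 0 < α) (hα : α ≤ 1 / (M + L))
    -- encoded gradient descent iterates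
    (hiter : ∀ t, w (t + 1) = w t - α • gradTilde X y S lam hgrad (A t) (w t))
    -- w* is a minimizer of f
    (hwstar : ∀ v, objF X y lam h wstar ≤ objF X y lam h v) :
    ∀ t : ℕ, 1 ≤ t →
      (1 / (t : ℝ)) * (∑ τ ∈ Finset.Icc 1 t, objF X y lam h (w τ)) -
          ((1 + 3 * ε) / (1 - 7 * ε)) * objF X y lam h wstar ≤
        (4 * ε * objF X y lam h (w 0) +
            (1 / (2 * α)) * ((w 0 - wstar) ⬝ᵥ (w 0 - wstar))) /
          ((1 - 7 * ε) * (t : ℝ)) := by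
  have hε1 : ε < 1 := by linarith
  have hFnn : ∀ v, 0 ≤ objF X y lam h v := fun v =>
    add_nonneg (mul_nonneg (by norm_num) (dot_self_nonneg' _)) (mul_nonneg hlam (hh v))
  -- step size facts
  have hMLpos : 0 < M + L := by
    by_contra hc
    push_neg at hc
    have : (1:ℝ)/(M+L) ≤ 0 := one_div_nonpos.mpr hc
    linarith
  have hαML : α * (M + L) ≤ 1 := (le_div_iff₀ hMLpos).mp hα
  -- smoothness coefficient bound, valid in all dimensions
  have hML : ∀ u : Fin p → ℝ, α*((1+ε)*M+L)*(u ⬝ᵥ u) ≤ (1+ε)*(u ⬝ᵥ u) := by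
    rcases Nat.eq_zero_or_pos p with hp | hp
    · intro u
      have hu0 : u ⬝ᵥ u = 0 := by subst hp; simp [dotProduct]
      rw [hu0]
      simp
    · -- p ≥ 1 : M ≥ 0 and L ≥ 0
      have hp' : (0:ℝ) < p := by exact_mod_cast hp
      set v : Fin p → ℝ := fun _ => 1 with hvdef
      have hv : v ⬝ᵥ v = p := by simp [dotProduct, hvdef]
      have hM0 : 0 ≤ M := by
        have h1 := hM v
        have h2 := dot_self_nonneg' (X *ᵥ v)
        rw [hv] at h1
        nlinarith
      have hL0 : 0 ≤ L := by
        have h1 := hconv 0 v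
        have h2 := hsmooth 0 v
        rw [sub_zero] at h1 h2
        have := hv
        nlinarith
      have hcoef : α*((1+ε)*M+L) ≤ 1+ε := by
        have h' := mul_le_mul_of_nonneg_left hαML (by linarith : (0:ℝ) ≤ 1+ε)
        have h'' : 0 ≤ ε*(α*L) := mul_nonneg hε0.le (mul_nonneg hα0.le hL0)
        nlinarith
      intro u
      exact mul_le_mul_of_nonneg_right hcoef (dot_self_nonneg' u)
  -- per-step recursion
  have hstep : ∀ t : ℕ,
      (1-ε) * ((w (t+1) - wstar) ⬝ᵥ (w (t+1) - wstar)) ≤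
      (1-ε) * ((w t - wstar) ⬝ᵥ (w t - wstar))
        + 2*α*ε*(1+ε) * objF X y lam h (w t)
        + 2*α*(1-ε)*(1+ε) * objF X y lam h wstar
        - 2*α*(1-ε) * objF X y lam h (w (t+1)) := by
    intro t
    obtain ⟨B, hB⟩ : ∃ B, B = A t := ⟨_, rfl⟩
    obtain ⟨g, hg⟩ : ∃ g, g = gradTilde X y S lam hgrad B (w t) := ⟨_, rfl⟩
    obtain ⟨gQ, hgQ⟩ : ∃ gQ, gQ = Xᵀ *ᵥ ∑ i ∈ B, (S i)ᵀ *ᵥ (S i *ᵥ (X *ᵥ w t - y)) := ⟨_, rfl⟩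
    have hgdef : g = gQ + lam • hgrad (w t) := by rw [hg, hgQ]; rfl
    have hwt : w (t+1) = w t - α • g := by rw [hg, hB]; exact hiter t
    -- sandwich facts
    have hsand : ∀ v : Fin p → ℝ,
        (1-ε) * objF X y lam h v ≤ (1/2)*encSq S B (X *ᵥ v - y) + lam * h v ∧
        (1/2)*encSq S B (X *ᵥ v - y) + lam * h v ≤ (1+ε) * objF X y lam h v := by
      intro v
      obtain ⟨hlo, hhi⟩ := hBRIP B (hB ▸ hA t) (X *ᵥ v - y)
      have hq : 0 ≤ (X *ᵥ v - y) ⬝ᵥ (X *ᵥ v - y) := dot_self_nonneg' _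
      have hhv : 0 ≤ lam * h v := mul_nonneg hlam (hh v)
      have hεh : 0 ≤ ε * (lam * h v) := mul_nonneg hε0.le hhv
      unfold objF
      constructor <;> nlinarith [hlo, hhi, hεh]
    -- convexity of the encoded objective
    have hconvex : (1/2)*encSq S B (X *ᵥ w t - y) + lam * h (w t) + g ⬝ᵥ (wstar - w t) ≤
        (1/2)*encSq S B (X *ᵥ wstar - y) + lam * h wstar := by
      have he := enc_expand X y S B wstar (w t)
      have hc := hconv (w t) wstar
      have hnn := encSq_nonneg S B (X *ᵥ (wstar - w t))
      have hsplit : g ⬝ᵥ (wstar - w t)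
          = gQ ⬝ᵥ (wstar - w t) + (lam • hgrad (w t)) ⬝ᵥ (wstar - w t) := by
        rw [hgdef, add_dotProduct]
      rw [← hgQ] at he
      linarith
    -- descent step
    have hdescent : (1/2)*encSq S B (X *ᵥ w (t+1) - y) + lam * h (w (t+1)) ≤
        (1/2)*encSq S B (X *ᵥ w t - y) + lam * h (w t) - (α*(1-ε)/2) * (g ⬝ᵥ g) := by
      have he := enc_expand X y S B (w (t+1)) (w t)
      rw [← hgQ] at he
      have hs := hsmooth (w t) (w (t+1))
      have hdvec : w (t+1) - w t = -(α • g) := by rw [hwt]; abel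
      have hgd : g ⬝ᵥ (w (t+1) - w t) = -(α * (g ⬝ᵥ g)) := by
        rw [hdvec, dotProduct_neg, dotProduct_smul, smul_eq_mul]
      have hgQd : gQ ⬝ᵥ (w (t+1) - w t) + (lam • hgrad (w t)) ⬝ᵥ (w (t+1) - w t)
          = -(α * (g ⬝ᵥ g)) := by
        rw [← add_dotProduct, ← hgdef, hgd]
      have hdd : (w (t+1) - w t) ⬝ᵥ (w (t+1) - w t) = α^2 * (g ⬝ᵥ g) := by
        rw [hdvec, neg_dotProduct, dotProduct_neg, neg_neg,
          smul_dotProduct, dotProduct_smul, smul_eq_mul, smul_eq_mul]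
        ring
      -- bound the encoded quadratic of the displacement
      have hBup := (hBRIP B (hB ▸ hA t) (X *ᵥ (w (t+1) - w t))).2
      have hMd := mul_le_mul_of_nonneg_left (hM (w (t+1) - w t))
        (by linarith : (0:ℝ) ≤ (1+ε)/2)
      have hMg := hML g
      have hg2 : 0 ≤ g ⬝ᵥ g := dot_self_nonneg' g
      have hα2 : 0 ≤ α/2 := by linarith
      have hMgα := mul_le_mul_of_nonneg_left hMg hα2
      rw [hdd] at hMd hs
      linarith [he, hs, hBup, hMd, hgQd, hMgα]
    -- distance expansion
    have hDexp : (w (t+1) - wstar) ⬝ᵥ (w (t+1) - wstar) =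
        (w t - wstar) ⬝ᵥ (w t - wstar) - 2*α*(g ⬝ᵥ (w t - wstar)) + α^2 * (g ⬝ᵥ g) := by
      have h1 : w (t+1) - wstar = (w t - wstar) - α • g := by rw [hwt]; abel
      rw [h1, dot_sub_smul]
    have hgflip : g ⬝ᵥ (wstar - w t) = -(g ⬝ᵥ (w t - wstar)) := by
      rw [← neg_sub (w t) wstar, dotProduct_neg]
    -- combine
    obtain ⟨hs1, hs2⟩ := hsand (w t)
    obtain ⟨hs3, hs4⟩ := hsand (w (t+1))
    obtain ⟨hs5, hs6⟩ := hsand wstar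
    have c1 : (0:ℝ) ≤ 2*α*(1-ε) := mul_nonneg (by linarith) (by linarith)
    have c2 : (0:ℝ) ≤ 2*α := by linarith
    have c3 : (0:ℝ) ≤ 2*α*ε := mul_nonneg (by linarith) (by linarith)
    have h1 := mul_le_mul_of_nonneg_left hconvex c1
    have h2 := mul_le_mul_of_nonneg_left hdescent c2
    have h3 := mul_le_mul_of_nonneg_left hs2 c3
    have h4 := mul_le_mul_of_nonneg_left hs6 c1
    have h5 := mul_le_mul_of_nonneg_left hs3 c2
    rw [hgflip] at h1
    rw [hDexp]
    linarith [h1, h2, h3, h4, h5]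
  -- summed recursion by induction
  have hind : ∀ T : ℕ,
      (1-ε) * ((w T - wstar) ⬝ᵥ (w T - wstar))
        + 2*α*(1-ε) * (∑ τ ∈ Finset.Icc 1 T, objF X y lam h (w τ)) ≤
      (1-ε) * ((w 0 - wstar) ⬝ᵥ (w 0 - wstar))
        + 2*α*ε*(1+ε) * (∑ τ ∈ Finset.range T, objF X y lam h (w τ))
        + 2*α*(1-ε)*(1+ε)*(T:ℝ)*objF X y lam h wstar := by
    intro T
    induction T with
    | zero => simp
    | succ k ih =>
      have hR := hstep k
      rw [Finset.sum_Icc_succ_top (by omega : 1 ≤ k+1), Finset.sum_range_succ]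
      push_cast
      linarith
  -- finish
  intro t ht
  have hT1 : (1:ℝ) ≤ (t:ℝ) := by exact_mod_cast ht
  have hDT : 0 ≤ (w t - wstar) ⬝ᵥ (w t - wstar) := dot_self_nonneg' _
  have hrange : ∑ τ ∈ Finset.range t, objF X y lam h (w τ)
      ≤ objF X y lam h (w 0) + ∑ τ ∈ Finset.Icc 1 t, objF X y lam h (w τ) := by
    have hsub : Finset.range t ⊆ insert 0 (Finset.Icc 1 t) := by
      intro x hx
      simp only [Finset.mem_range] at hx
      simp only [Finset.mem_insert, Finset.mem_Icc]
      omega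
    calc ∑ τ ∈ Finset.range t, objF X y lam h (w τ)
        ≤ ∑ τ ∈ insert 0 (Finset.Icc 1 t), objF X y lam h (w τ) :=
          Finset.sum_le_sum_of_subset_of_nonneg hsub (fun i _ _ => hFnn (w i))
      _ = objF X y lam h (w 0) + ∑ τ ∈ Finset.Icc 1 t, objF X y lam h (w τ) :=
          Finset.sum_insert (by simp)
  have hkey : 2*α*(1-ε) * (∑ τ ∈ Finset.Icc 1 t, objF X y lam h (w τ)) ≤
      (1-ε) * ((w 0 - wstar) ⬝ᵥ (w 0 - wstar))
        + 2*α*ε*(1+ε) * (objF X y lam h (w 0) + ∑ τ ∈ Finset.Icc 1 t, objF X y lam h (w τ))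
        + 2*α*(1-ε)*(1+ε)*(t:ℝ)*objF X y lam h wstar := by
    have c3 : (0:ℝ) ≤ 2*α*ε*(1+ε) := mul_nonneg (mul_nonneg (by linarith) (by linarith)) (by linarith)
    have h6 := mul_le_mul_of_nonneg_left hrange c3
    have h7 : 0 ≤ (1-ε) * ((w t - wstar) ⬝ᵥ (w t - wstar)) :=
      mul_nonneg (by linarith) hDT
    linarith [hind t, h6, h7]
  exact final_arith ε α _ _ _ _ _ hε0 hε hα0 hT1 (hFnn (w 0)) (hFnn wstar)
    (dot_self_nonneg' _) hkey

end Stmt0
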